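/- Let k be a field and R a commutative graded k-algebra with grading 𝒜 : ℕ → Submodule k R, 𝒜 0 = k·1 (R is not assumed to be a domain). If R is a Hilbert–Serre ring, then the Krull dimension of R is at most the Hilbert–Serre dimension: ringKrullDim R ≤ d(R). -/

import Mathlib

/-- The boundedness condition defining Hilbert–Serre rings: for all `t ∈ (0,1)` the
Poincaré series `∑ F n * tⁿ` converges and `(1 - t) ^ d` times its sum is bounded by a
uniform constant `C > 0`. -/
def HSBound (F : ℕ → ℕ) (d : ℕ) : Prop :=
  ∃ C : ℝ, 0 < C ∧ ∀ t : ℝ, t ∈ Set.Ioo (0 : ℝ) 1 →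
    Summable (fun n => (F n : ℝ) * t ^ n) ∧
      (1 - t) ^ d * (∑' n, (F n : ℝ) * t ^ n) ≤ C

/-- A graded algebra with grading `𝒜` is a *Hilbert–Serre ring* if every graded component
is finite dimensional over `k` and the Poincaré series `∑ dim_k (𝒜 n) tⁿ` satisfies the
boundedness condition `HSBound` for some `d`. -/
def IsHilbertSerre {k R : Type*} [Field k] [CommRing R] [Algebra k R]
    (𝒜 : ℕ → Submodule k R) : Prop :=
  (∀ n, FiniteDimensional k (𝒜 n)) ∧
    ∃ d, HSBound (fun n => Module.finrank k (𝒜 n)) d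

/-- The Hilbert–Serre dimension `d(R)`: the least `d` such that `(1-t)^d P_R(t)` is
bounded on `(0,1)`. -/
noncomputable def hsDim {k R : Type*} [Field k] [CommRing R] [Algebra k R]
    (𝒜 : ℕ → Submodule k R) : ℕ :=
  sInf {d | HSBound (fun n => Module.finrank k (𝒜 n)) d}



open MvPolynomial

lemma aeval_eq_eval₂_finSuccEquiv {k S : Type*} [CommSemiring k] [CommRing S] [Algebra k S]
    (m : ℕ) (x : Fin (m + 1) → S) (f : MvPolynomial (Fin (m + 1)) k) :
    MvPolynomial.aeval x f =
      Polynomial.eval₂ ((MvPolynomial.aeval (fun i : Fin m => x i.succ)).toRingHom) (x 0)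
        (MvPolynomial.finSuccEquiv k m f) := by
  induction f using MvPolynomial.induction_on with
  | C a =>
      simp [MvPolynomial.finSuccEquiv_apply]
  | add p q hp hq =>
      simp [map_add, Polynomial.eval₂_add, hp, hq]
  | mul_X p i hp =>
      rw [map_mul, map_mul, Polynomial.eval₂_mul, hp]
      congr 1
      refine Fin.cases ?_ (fun j => ?_) i
      · simp [MvPolynomial.finSuccEquiv_X_zero]
      · simp [MvPolynomial.finSuccEquiv_X_succ]

/-- Evaluation at a chain of elements is injective: if `q 0 < q 1 < ... ` is a monotone chain
of primes in a domain `S`, `x i ∈ q i`, `x i ∉ q j` for `j < i` and `x i ≠ 0`, then a polynomial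
vanishing at `x` is zero. -/
lemma eq_zero_of_aeval_chain_eq_zero {k : Type*} [Field k] :
    ∀ (m : ℕ) (S : Type u) [CommRing S] [IsDomain S] [Algebra k S]
      (q : Fin m → Ideal S), Monotone q → (∀ i, (q i).IsPrime) →
      ∀ (x : Fin m → S), (∀ i, x i ∈ q i) → (∀ i, x i ≠ 0) →
        (∀ i j : Fin m, j < i → x i ∉ q j) →
        ∀ f : MvPolynomial (Fin m) k, MvPolynomial.aeval x f = 0 → f = 0 := by
  intro m
  induction m with
  | zero =>
      intro S _ _ _ q _ _ x _ _ _ f hf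
      obtain ⟨c, rfl⟩ := MvPolynomial.C_surjective (Fin 0) f
      rw [MvPolynomial.aeval_C] at hf
      rw [show c = 0 from (algebraMap k S).injective (by simpa using hf), map_zero]
  | succ m ih =>
      intro S _ _ _ q hmono hprime x hmem hne hnm f hf
      haveI : (q 0).IsPrime := hprime 0
      set π : S →ₐ[k] S ⧸ (q 0) := Ideal.Quotient.mkₐ k (q 0) with hπ
      -- data for the inductive call
      set q' : Fin m → Ideal (S ⧸ (q 0)) :=
        fun i => (q i.succ).map (Ideal.Quotient.mk (q 0)) with hq'
      have hq0le : ∀ i : Fin m, q 0 ≤ q i.succ := fun i => hmono (Fin.zero_le _)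
      have hmono' : Monotone q' := fun i j hij =>
        Ideal.map_mono (hmono (by simpa [Fin.succ_le_succ_iff] using hij))
      have hprime' : ∀ i, (q' i).IsPrime := fun i => by
        haveI : (q i.succ).IsPrime := hprime i.succ
        exact Ideal.map_isPrime_of_surjective Ideal.Quotient.mk_surjective
          (by rw [Ideal.mk_ker]; exact hq0le i)
      set x' : Fin m → S ⧸ (q 0) := fun i => π (x i.succ) with hx'
      have hmem' : ∀ i, x' i ∈ q' i := fun i =>
        Ideal.mem_map_of_mem _ (hmem i.succ)
      have hne' : ∀ i, x' i ≠ 0 := fun i h => by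
        rw [hx'] at h
        exact hnm i.succ 0 (Fin.succ_pos i)
          ((Ideal.Quotient.eq_zero_iff_mem).mp (by simpa [hπ, Ideal.Quotient.mkₐ_eq_mk] using h))
      have hnm' : ∀ i j : Fin m, j < i → x' i ∉ q' j := fun i j hij h => by
        rw [hx', hq'] at h
        have : x i.succ ∈ q j.succ := by
          rw [← Ideal.mem_quotient_iff_mem (hq0le j)]
          simpa [hπ, Ideal.Quotient.mkₐ_eq_mk] using h
        exact hnm i.succ j.succ (by simpa [Fin.succ_lt_succ_iff] using hij) this
      -- the polynomial as a polynomial in the first variable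
      set φ : MvPolynomial (Fin m) k →+* S :=
        (MvPolynomial.aeval (fun i : Fin m => x i.succ)).toRingHom with hφdef
      -- key claim by induction on the degree
      have key : ∀ (n : ℕ) (P : Polynomial (MvPolynomial (Fin m) k)), P.natDegree ≤ n →
          Polynomial.eval₂ φ (x 0) P = 0 → P = 0 := by
        intro n
        induction n with
        | zero =>
            intro P hdeg heval
            have hc0 : P.coeff 0 = 0 := by
              apply ih (S ⧸ (q 0)) q' hmono' hprime' x' hmem' hne' hnm'
              have h1 : π.toRingHom (Polynomial.eval₂ φ (x 0) P) = 0 := by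
                rw [heval]; exact map_zero _
              rw [Polynomial.hom_eval₂] at h1
              have hx0 : π.toRingHom (x 0) = 0 :=
                Ideal.Quotient.eq_zero_iff_mem.mpr (hmem 0)
              rw [hx0, Polynomial.eval₂_at_zero] at h1
              have hcomp : (π.toRingHom.comp φ) (P.coeff 0)
                  = MvPolynomial.aeval x' (P.coeff 0) := by
                have := MvPolynomial.comp_aeval (f := fun i : Fin m => x i.succ) π
                calc (π.toRingHom.comp φ) (P.coeff 0)
                    = π (MvPolynomial.aeval (fun i : Fin m => x i.succ) (P.coeff 0)) := rfl
                  _ = (π.comp (MvPolynomial.aeval (fun i : Fin m => x i.succ))) (P.coeff 0) := rfl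
                  _ = MvPolynomial.aeval x' (P.coeff 0) := by rw [this]
              rw [hcomp] at h1
              exact h1
            have : P = Polynomial.C (P.coeff 0) :=
              (Polynomial.eq_C_of_natDegree_le_zero hdeg)
            rw [this, hc0, map_zero]
        | succ n ihn =>
            intro P hdeg heval
            have hc0 : P.coeff 0 = 0 := by
              apply ih (S ⧸ (q 0)) q' hmono' hprime' x' hmem' hne' hnm'
              have h1 : π.toRingHom (Polynomial.eval₂ φ (x 0) P) = 0 := by
                rw [heval]; exact map_zero _
              rw [Polynomial.hom_eval₂] at h1
              have hx0 : π.toRingHom (x 0) = 0 :=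
                Ideal.Quotient.eq_zero_iff_mem.mpr (hmem 0)
              rw [hx0, Polynomial.eval₂_at_zero] at h1
              have hcomp : (π.toRingHom.comp φ) (P.coeff 0)
                  = MvPolynomial.aeval x' (P.coeff 0) := by
                have := MvPolynomial.comp_aeval (f := fun i : Fin m => x i.succ) π
                calc (π.toRingHom.comp φ) (P.coeff 0)
                    = (π.comp (MvPolynomial.aeval (fun i : Fin m => x i.succ))) (P.coeff 0) := rfl
                  _ = MvPolynomial.aeval x' (P.coeff 0) := by rw [this]
              rw [hcomp] at h1
              exact h1
            have hXP : Polynomial.X * P.divX = P := by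
              have := Polynomial.X_mul_divX_add (p := P)
              rwa [hc0, map_zero, add_zero] at this
            have hdivX : Polynomial.eval₂ φ (x 0) P.divX = 0 := by
              have : Polynomial.eval₂ φ (x 0) (Polynomial.X * P.divX) = 0 := by
                rw [hXP, heval]
              rw [Polynomial.eval₂_mul, Polynomial.eval₂_X] at this
              rcases mul_eq_zero.mp this with h | h
              · exact absurd h (hne 0)
              · exact h
            have hdlt : P.divX.natDegree ≤ n := by
              have := Polynomial.natDegree_divX_eq_natDegree_tsub_one (p := P)
              omega
            have : P.divX = 0 := ihn P.divX hdlt hdivX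
            rw [← hXP, this, mul_zero]
      have heval2 : Polynomial.eval₂ φ (x 0) (MvPolynomial.finSuccEquiv k m f) = 0 := by
        rw [← aeval_eq_eval₂_finSuccEquiv m x f, hf]
      have hP0 := key (MvPolynomial.finSuccEquiv k m f).natDegree
        (MvPolynomial.finSuccEquiv k m f) le_rfl heval2
      have := (MvPolynomial.finSuccEquiv k m).injective (a₁ := f) (a₂ := 0) (by simpa using hP0)
      exact this

lemma HSBound.partial_sum_le {F : ℕ → ℕ} {d : ℕ} (h : HSBound F d) :
    ∃ C : ℝ, 0 < C ∧ ∀ a : ℕ,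
      (∑ n ∈ Finset.range (a + 1), (F n : ℝ)) ≤ C * ((a : ℝ) + 2) ^ d := by
  obtain ⟨C, hC, hB⟩ := h
  refine ⟨3 * C, by positivity, fun a => ?_⟩
  set t : ℝ := ((a : ℝ) + 1) / ((a : ℝ) + 2) with ht
  have ha2 : (0:ℝ) < (a : ℝ) + 2 := by positivity
  have ht0 : 0 < t := by positivity
  have ht1 : t < 1 := by
    rw [ht, div_lt_one ha2]; linarith
  obtain ⟨hsum, hbound⟩ := hB t ⟨ht0, ht1⟩
  have h1t : 1 - t = 1 / ((a : ℝ) + 2) := by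
    rw [ht]; field_simp; ring
  -- the tsum is bounded by C * (a+2)^d
  have htsum : (∑' n, (F n : ℝ) * t ^ n) ≤ C * ((a : ℝ) + 2) ^ d := by
    have hpow : (0:ℝ) < (1 - t) ^ d := by
      have : (0:ℝ) < 1 - t := by linarith
      positivity
    have := hbound
    rw [h1t, div_pow, one_pow] at this
    rw [div_mul_eq_mul_div, div_le_iff₀ (by positivity)] at this
    calc (∑' n, (F n : ℝ) * t ^ n) = 1 * (∑' n, (F n : ℝ) * t ^ n) := by ring
      _ ≤ C * ((a:ℝ) + 2) ^ d := by linarith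
  -- partial sums with weight t^n bounded by tsum
  have hpartial : (∑ n ∈ Finset.range (a + 1), (F n : ℝ) * t ^ n)
      ≤ ∑' n, (F n : ℝ) * t ^ n :=
    Summable.sum_le_tsum _ (fun n _ => by positivity) hsum
  -- t^a lower bounds t^n for n ≤ a
  have hlow : (∑ n ∈ Finset.range (a + 1), (F n : ℝ)) * t ^ a
      ≤ ∑ n ∈ Finset.range (a + 1), (F n : ℝ) * t ^ n := by
    rw [Finset.sum_mul]
    refine Finset.sum_le_sum fun n hn => ?_
    have hna : n ≤ a := by
      have := Finset.mem_range.mp hn; omega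
    exact mul_le_mul_of_nonneg_left
      (pow_le_pow_of_le_one ht0.le ht1.le hna) (by positivity)
  -- t^a ≥ 1/3
  have hta : (1:ℝ) / 3 ≤ t ^ a := by
    have hu : (0:ℝ) < (a : ℝ) + 1 := by positivity
    have hinv : t = (((a:ℝ) + 2) / ((a:ℝ) + 1))⁻¹ := by
      rw [ht, inv_div]
    have hbig : (((a:ℝ) + 2) / ((a:ℝ) + 1)) ^ a ≤ 3 := by
      have h1 : ((a:ℝ) + 2) / ((a:ℝ) + 1) = 1 + 1 / ((a:ℝ) + 1) := by field_simp; ring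
      have h2 : (1 : ℝ) + 1 / ((a:ℝ) + 1) ≤ Real.exp (1 / ((a:ℝ) + 1)) := by
        have := Real.add_one_le_exp (1 / ((a:ℝ) + 1))
        linarith
      have h3 : (1 + 1 / ((a:ℝ) + 1)) ^ a ≤ (Real.exp (1 / ((a:ℝ) + 1))) ^ a :=
        pow_le_pow_left₀ (by positivity) h2 a
      have h4 : (Real.exp (1 / ((a:ℝ) + 1))) ^ a = Real.exp ((a : ℝ) * (1 / ((a:ℝ) + 1))) := by
        rw [← Real.exp_nat_mul]
      have h5 : (a : ℝ) * (1 / ((a:ℝ) + 1)) ≤ 1 := by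
        rw [mul_one_div, div_le_one hu]; linarith
      have h6 : Real.exp ((a : ℝ) * (1 / ((a:ℝ) + 1))) ≤ Real.exp 1 := Real.exp_le_exp.mpr h5
      have h7 : Real.exp 1 ≤ 3 := by
        have := Real.exp_one_lt_d9
        linarith
      rw [h1]
      calc (1 + 1 / ((a:ℝ) + 1)) ^ a ≤ (Real.exp (1 / ((a:ℝ) + 1))) ^ a := h3
        _ = Real.exp ((a : ℝ) * (1 / ((a:ℝ) + 1))) := h4
        _ ≤ Real.exp 1 := h6
        _ ≤ 3 := h7
    have hpos : (0:ℝ) < (((a:ℝ) + 2) / ((a:ℝ) + 1)) ^ a := by positivity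
    rw [hinv, inv_pow]
    rw [one_div]
    exact inv_anti₀ hpos hbig
  -- combine
  have hS0 : (0:ℝ) ≤ ∑ n ∈ Finset.range (a + 1), (F n : ℝ) :=
    Finset.sum_nonneg fun n _ => by positivity
  have step : (∑ n ∈ Finset.range (a + 1), (F n : ℝ)) * (1/3)
      ≤ C * ((a : ℝ) + 2) ^ d := by
    calc (∑ n ∈ Finset.range (a + 1), (F n : ℝ)) * (1/3)
        ≤ (∑ n ∈ Finset.range (a + 1), (F n : ℝ)) * t ^ a :=
          mul_le_mul_of_nonneg_left hta hS0
      _ ≤ ∑ n ∈ Finset.range (a + 1), (F n : ℝ) * t ^ n := hlow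
      _ ≤ ∑' n, (F n : ℝ) * t ^ n := hpartial
      _ ≤ C * ((a : ℝ) + 2) ^ d := htsum
  linarith


section Graded

variable {k R : Type*} [Field k] [CommRing R] [Algebra k R]
variable (𝒜 : ℕ → Submodule k R) [GradedAlgebra 𝒜]

/-- The submodule of elements of degree at most `a`. -/
noncomputable def Vle (a : ℕ) : Submodule k R := ⨆ i : Fin (a + 1), 𝒜 i

lemma mem_Vle_of_mem {n a : ℕ} (hna : n ≤ a) {r : R} (hr : r ∈ 𝒜 n) : r ∈ Vle 𝒜 a :=
  Submodule.mem_iSup_of_mem (⟨n, by omega⟩ : Fin (a + 1)) hr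

lemma Vle_mono {a b : ℕ} (hab : a ≤ b) : Vle 𝒜 a ≤ Vle 𝒜 b :=
  iSup_le fun i => le_iSup_of_le (⟨i.1, by omega⟩ : Fin (b + 1)) le_rfl

lemma Vle_mul_Vle (a b : ℕ) : Vle 𝒜 a * Vle 𝒜 b ≤ Vle 𝒜 (a + b) := by
  rw [Vle, Submodule.iSup_mul]
  refine iSup_le fun i => ?_
  rw [Vle, Submodule.mul_iSup]
  refine iSup_le fun j => ?_
  rw [Submodule.mul_le]
  intro xi hxi yj hyj
  exact mem_Vle_of_mem 𝒜 (show i.1 + j.1 ≤ a + b by omega) (SetLike.mul_mem_graded hxi hyj)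

lemma mul_mem_Vle {a b : ℕ} {x y : R} (hx : x ∈ Vle 𝒜 a) (hy : y ∈ Vle 𝒜 b) :
    x * y ∈ Vle 𝒜 (a + b) :=
  Vle_mul_Vle 𝒜 a b (Submodule.mul_mem_mul hx hy)

lemma one_mem_Vle (a : ℕ) : (1 : R) ∈ Vle 𝒜 a :=
  mem_Vle_of_mem 𝒜 (Nat.zero_le a) (SetLike.one_mem_graded 𝒜)

lemma pow_mem_Vle {D : ℕ} {x : R} (hx : x ∈ Vle 𝒜 D) (n : ℕ) : x ^ n ∈ Vle 𝒜 (D * n) := by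
  induction n with
  | zero => simpa using one_mem_Vle 𝒜 0
  | succ n ihn =>
      have := mul_mem_Vle 𝒜 ihn hx
      rw [← pow_succ] at this
      have hE : D * n + D = D * (n + 1) := by ring
      rwa [hE] at this

lemma prod_pow_mem_Vle {ι : Type*} [DecidableEq ι] {D : ℕ} (g : ι → R) (e : ι → ℕ)
    (hg : ∀ i, g i ∈ Vle 𝒜 D) (s : Finset ι) :
    (∏ i ∈ s, g i ^ e i) ∈ Vle 𝒜 (D * ∑ i ∈ s, e i) := by
  induction s using Finset.induction_on with
  | empty => simpa using one_mem_Vle 𝒜 0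
  | insert j s' hji ih =>
      rw [Finset.prod_insert hji, Finset.sum_insert hji, mul_add]
      exact mul_mem_Vle 𝒜 (pow_mem_Vle 𝒜 (hg j) (e j)) ih

lemma exists_mem_Vle (r : R) : ∃ D, r ∈ Vle 𝒜 D := by
  classical
  have h := DirectSum.sum_support_decompose 𝒜 r
  refine ⟨((DirectSum.decompose 𝒜 r).support).sup id, ?_⟩
  have hsum : (∑ n ∈ (DirectSum.decompose 𝒜 r).support, ((DirectSum.decompose 𝒜 r) n : R))
      ∈ Vle 𝒜 (((DirectSum.decompose 𝒜 r).support).sup id) :=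
    Submodule.sum_mem _ fun n hn =>
      mem_Vle_of_mem 𝒜 (Finset.le_sup (f := id) hn) (DirectSum.decompose 𝒜 r n).2
  rwa [h] at hsum

end Graded

section Finrank

variable {k V : Type*} [Field k] [AddCommGroup V] [Module k V]

lemma finrank_finset_sup_le {ι : Type*} [DecidableEq ι] (p : ι → Submodule k V)
    [∀ i, FiniteDimensional k (p i)] (s : Finset ι) :
    Module.finrank k ↥(s.sup p) ≤ ∑ i ∈ s, Module.finrank k (p i) := by
  induction s using Finset.induction_on with
  | empty => simp [finrank_bot]
  | insert j s' hji ih =>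
      rw [Finset.sup_insert, Finset.sum_insert hji]
      exact le_trans (Submodule.finrank_add_le_finrank_add_finrank _ _)
        (by omega)

lemma finrank_iSup_fin_le {ι : Type*} [Fintype ι] [DecidableEq ι] (p : ι → Submodule k V)
    [∀ i, FiniteDimensional k (p i)] :
    Module.finrank k ↥(⨆ i, p i) ≤ ∑ i, Module.finrank k (p i) := by
  have h : (⨆ i, p i) = Finset.univ.sup p := by
    rw [Finset.sup_eq_iSup]
    exact le_antisymm (iSup_le fun i => le_iSup₂ (f := fun i _ => p i) i (Finset.mem_univ i))
      (iSup₂_le fun i _ => le_iSup _ i)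
  rw [h]
  exact finrank_finset_sup_le p Finset.univ

end Finrank

section VleRank

variable {k R : Type*} [Field k] [CommRing R] [Algebra k R]
variable (𝒜 : ℕ → Submodule k R) [GradedAlgebra 𝒜]

lemma finrank_Vle_le (hfd : ∀ n, FiniteDimensional k (𝒜 n)) (a : ℕ) :
    Module.finrank k ↥(Vle 𝒜 a) ≤ ∑ n ∈ Finset.range (a + 1), Module.finrank k (𝒜 n) := by
  haveI := hfd
  rw [Vle, ← Fin.sum_univ_eq_sum_range (fun n => Module.finrank k (𝒜 n)) (a + 1)]
  exact finrank_iSup_fin_le _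

end VleRank


section Chain

set_option maxHeartbeats 2000000 in
lemma LTSeries_length_le_of_HSBound {k R : Type*} [Field k] [CommRing R] [Algebra k R]
    (𝒜 : ℕ → Submodule k R) [GradedAlgebra 𝒜]
    (hfd : ∀ n, FiniteDimensional k (𝒜 n)) {d : ℕ}
    (hs : HSBound (fun n => Module.finrank k (𝒜 n)) d)
    (c : LTSeries (PrimeSpectrum R)) : c.length ≤ d := by
  classical
  by_contra hcon
  push_neg at hcon
  set m := c.length with hm
  have hlt : ∀ i : Fin m, (c.toFun i.castSucc).asIdeal < (c.toFun i.succ).asIdeal := fun i =>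
    (PrimeSpectrum.asIdeal_lt_asIdeal _ _).mpr (c.strictMono (Fin.castSucc_lt_succ (i := i)))
  choose a hamem hanot using fun i => SetLike.exists_of_lt (hlt i)
  choose Dfun hD using fun i => exists_mem_Vle 𝒜 (a i)
  set D : ℕ := Finset.univ.sup Dfun with hDdef
  have haD : ∀ i, a i ∈ Vle 𝒜 D := fun i =>
    Vle_mono 𝒜 (Finset.le_sup (Finset.mem_univ i)) (hD i)
  set p0 : Ideal R := (c.toFun 0).asIdeal with hp0
  haveI : p0.IsPrime := (c.toFun 0).isPrime
  have hmono0 : ∀ j : Fin (m+1), p0 ≤ (c.toFun j).asIdeal := fun j =>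
    (PrimeSpectrum.asIdeal_le_asIdeal _ _).mpr (c.monotone (Fin.zero_le j))
  set π : R →ₐ[k] R ⧸ p0 := Ideal.Quotient.mkₐ k p0 with hπ
  set q : Fin m → Ideal (R ⧸ p0) :=
    fun i => ((c.toFun i.succ).asIdeal).map (Ideal.Quotient.mk p0) with hq
  have hmonoq : Monotone q := fun i j hij => Ideal.map_mono
    ((PrimeSpectrum.asIdeal_le_asIdeal _ _).mpr (c.monotone (Fin.succ_le_succ_iff.mpr hij)))
  have hprimeq : ∀ i, (q i).IsPrime := fun i => by
    haveI := (c.toFun i.succ).isPrime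
    exact Ideal.map_isPrime_of_surjective Ideal.Quotient.mk_surjective
      (by rw [Ideal.mk_ker]; exact hmono0 i.succ)
  set x : Fin m → R ⧸ p0 := fun i => π (a i) with hx
  have hmemx : ∀ i, x i ∈ q i := fun i => Ideal.mem_map_of_mem _ (hamem i)
  have hnex : ∀ i, x i ≠ 0 := fun i h => by
    have h1 : a i ∈ p0 := Ideal.Quotient.eq_zero_iff_mem.mp
      (by simpa [hx, hπ, Ideal.Quotient.mkₐ_eq_mk] using h)
    exact hanot i (hmono0 i.castSucc h1)
  have hnmx : ∀ i j : Fin m, j < i → x i ∉ q j := fun i j hij h => by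
    have h1 : a i ∈ (c.toFun j.succ).asIdeal := by
      rw [← Ideal.mem_quotient_iff_mem (hmono0 j.succ)]
      simpa [hx, hq, hπ, Ideal.Quotient.mkₐ_eq_mk] using h
    have h2 : (c.toFun j.succ).asIdeal ≤ (c.toFun i.castSucc).asIdeal :=
      (PrimeSpectrum.asIdeal_le_asIdeal _ _).mpr (c.monotone (by
        rw [Fin.le_def]
        rw [Fin.lt_def] at hij
        simp only [Fin.val_succ, Fin.coe_castSucc]
        omega))
    exact hanot i (h2 h1)
  have hinj := eq_zero_of_aeval_chain_eq_zero (k := k) m (R ⧸ p0) q hmonoq hprimeq x hmemx hnex hnmx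
  have hker : LinearMap.ker (MvPolynomial.aeval (R := k) x).toLinearMap = ⊥ :=
    LinearMap.ker_eq_bot'.mpr fun f hf => hinj f hf
  have hli := ((MvPolynomial.basisMonomials (Fin m) k).linearIndependent).map'
    (MvPolynomial.aeval x).toLinearMap hker
  obtain ⟨C', hC', hPS⟩ := hs.partial_sum_le
  set K : ℝ := C' * (((D * m : ℕ) : ℝ) + 2) ^ d with hK
  have hNle : ∀ N : ℕ, ((N : ℝ) + 1) ≤ K := by
    intro N
    set A : ℕ := D * (m * N) with hA
    set emb : (Fin m → Fin (N+1)) → (Fin m →₀ ℕ) :=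
      fun e => Finsupp.equivFunOnFinite.symm (fun i => (e i : ℕ)) with hemb
    have hembinj : Function.Injective emb := fun e1 e2 h => funext fun i =>
      Fin.val_injective (congrFun (Finsupp.equivFunOnFinite.symm.injective h) i)
    have hli2 := hli.comp emb hembinj
    set W : Submodule k (R ⧸ p0) := Submodule.map π.toLinearMap (Vle 𝒜 A) with hW
    have hval : ∀ e : Fin m → Fin (N+1),
        ((MvPolynomial.aeval x).toLinearMap ∘ ⇑(MvPolynomial.basisMonomials (Fin m) k) ∘ emb) e
          ∈ W := by
      intro e
      have hmono1 : MvPolynomial.aeval x (MvPolynomial.monomial (emb e) (1:k))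
          = π (∏ i : Fin m, a i ^ ((e i : ℕ))) := by
        rw [MvPolynomial.aeval_monomial, map_one, one_mul]
        rw [Finsupp.prod_fintype _ _ (fun i => pow_zero (x i))]
        rw [map_prod]
        refine Finset.prod_congr rfl fun i _ => ?_
        rw [map_pow]
        congr 1
      have hmem2 : (∏ i : Fin m, a i ^ ((e i : ℕ))) ∈ Vle 𝒜 A := by
        have hprod := prod_pow_mem_Vle 𝒜 a (fun i => (e i : ℕ)) haD Finset.univ
        refine Vle_mono 𝒜 ?_ hprod
        have hsum : (∑ i : Fin m, (e i : ℕ)) ≤ m * N := by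
          calc (∑ i : Fin m, (e i : ℕ)) ≤ ∑ _i : Fin m, N :=
                Finset.sum_le_sum (fun i _ => by omega)
            _ = m * N := by simp [Finset.sum_const, Finset.card_univ, Nat.smul_one_eq_cast]
        exact Nat.mul_le_mul_left D hsum
      have heq : ((MvPolynomial.aeval x).toLinearMap ∘
            ⇑(MvPolynomial.basisMonomials (Fin m) k) ∘ emb) e
          = π (∏ i : Fin m, a i ^ ((e i : ℕ))) := by
        simp only [Function.comp_apply, MvPolynomial.coe_basisMonomials]
        exact hmono1
      rw [heq]
      exact Submodule.mem_map_of_mem hmem2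
    set v' : (Fin m → Fin (N+1)) → W := fun e => ⟨_, hval e⟩ with hv'
    have hli3 : LinearIndependent k v' := by
      apply LinearIndependent.of_comp W.subtype
      exact hli2
    haveI := hfd
    haveI : FiniteDimensional k (Vle 𝒜 A) := by unfold Vle; infer_instance
    haveI : FiniteDimensional k W := Module.Finite.map (Vle 𝒜 A) π.toLinearMap
    have hcard := hli3.fintype_card_le_finrank
    have hcard2 : (N+1)^m ≤ Module.finrank k W := by
      simpa [Fintype.card_pi_const, Fintype.card_fin] using hcard
    have h3 : Module.finrank k W ≤ Module.finrank k ↥(Vle 𝒜 A) :=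
      Submodule.finrank_map_le _ _
    have h4 := finrank_Vle_le 𝒜 hfd A
    have h5 : ((N:ℝ)+1)^m ≤ C' * ((A : ℝ) + 2)^d := by
      have hchain : ((N+1)^m : ℕ) ≤ ∑ n ∈ Finset.range (A+1), Module.finrank k (𝒜 n) :=
        le_trans hcard2 (le_trans h3 h4)
      calc ((N:ℝ)+1)^m = (((N+1)^m : ℕ) : ℝ) := by push_cast; ring
        _ ≤ ((∑ n ∈ Finset.range (A+1), Module.finrank k (𝒜 n) : ℕ) : ℝ) := by
            exact_mod_cast hchain
        _ = ∑ n ∈ Finset.range (A+1), ((Module.finrank k (𝒜 n) : ℕ) : ℝ) := by push_cast; rfl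
        _ ≤ C' * ((A : ℝ) + 2)^d := hPS A
    have hbase : ((A:ℝ) + 2) ≤ (((D*m : ℕ):ℝ) + 2) * ((N:ℝ)+1) := by
      push_cast [hA]
      nlinarith [Nat.cast_nonneg (α := ℝ) D, Nat.cast_nonneg (α := ℝ) m,
        Nat.cast_nonneg (α := ℝ) N,
        mul_nonneg (Nat.cast_nonneg (α := ℝ) D) (Nat.cast_nonneg (α := ℝ) m)]
    have hm1 : d + 1 ≤ m := hcon
    have hone : (1:ℝ) ≤ (N:ℝ) + 1 := by
      have : (0:ℝ) ≤ (N:ℝ) := Nat.cast_nonneg N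
      linarith
    have h6 : ((N:ℝ)+1)^(d+1) ≤ ((N:ℝ)+1)^m := pow_le_pow_right₀ hone hm1
    have h7 : ((A:ℝ)+2)^d ≤ ((((D*m : ℕ):ℝ)+2) * ((N:ℝ)+1))^d :=
      pow_le_pow_left₀ (by positivity) hbase d
    have h8 : ((N:ℝ)+1)^(d+1) ≤ K * ((N:ℝ)+1)^d := by
      calc ((N:ℝ)+1)^(d+1) ≤ ((N:ℝ)+1)^m := h6
        _ ≤ C' * ((A:ℝ)+2)^d := h5
        _ ≤ C' * (((((D*m : ℕ):ℝ)+2)) * ((N:ℝ)+1))^d :=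
            mul_le_mul_of_nonneg_left h7 hC'.le
        _ = K * ((N:ℝ)+1)^d := by rw [hK, mul_pow]; ring
    have hp : (0:ℝ) < ((N:ℝ)+1)^d := by positivity
    by_contra hlt2
    push_neg at hlt2
    have hstrict : K * ((N:ℝ)+1)^d < ((N:ℝ)+1) * ((N:ℝ)+1)^d :=
      mul_lt_mul_of_pos_right hlt2 hp
    rw [pow_succ] at h8
    linarith
  have hfin1 := hNle ⌈K⌉₊
  have hfin2 := Nat.le_ceil K
  linarith

end Chain

/-- for a Hilbert–Serre ring `R` (not necessarily a domain), the Krull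
dimension of `R` is at most the Hilbert–Serre dimension `d(R)`. -/
theorem ringKrullDim_le_hsDim {k R : Type*} [Field k] [CommRing R] [Algebra k R]
    (𝒜 : ℕ → Submodule k R) [GradedAlgebra 𝒜] (h0 : 𝒜 0 = 1)
    (hHS : IsHilbertSerre 𝒜) :
    ringKrullDim R ≤ (hsDim 𝒜 : WithBot ℕ∞) := by
  obtain ⟨hfd, d0, hd0⟩ := hHS
  have hne : {d | HSBound (fun n => Module.finrank k (𝒜 n)) d}.Nonempty := ⟨d0, hd0⟩
  have hmem : HSBound (fun n => Module.finrank k (𝒜 n)) (hsDim 𝒜) := Nat.sInf_mem hne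
  have key : ∀ c : LTSeries (PrimeSpectrum R), c.length ≤ hsDim 𝒜 := fun c =>
    LTSeries_length_le_of_HSBound 𝒜 hfd hmem c
  show Order.krullDim (PrimeSpectrum R) ≤ ((hsDim 𝒜 : ℕ∞) : WithBot ℕ∞)
  exact iSup_le fun c => by exact_mod_cast key c
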